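/- Let n ≥ 3 agents have monotone, nonnegative, cancelable valuations (with v_i(∅) = 0) over a finite set M of items, and suppose the agents have a common tiered ranking of size at most 2: there is an ordered partition M = M_1 ∪ M_2 ∪ ... ∪ M_s into pairwise disjoint tiers with |M_j| ≤ 2 for every j, such that for every agent i, all indices k < j, every g ∈ M_k and every h ∈ M_j, v_i({g}) ≥ v_i({h}). Then there exists a complete allocation of M that is EFX. -/

import Mathlib

open Finset

namespace EFXAux

variable {ι : Type*} [DecidableEq ι] {n : ℕ} {M : Finset ι} {v : Fin n → Finset ι → ℝ}

/-- Monotone hypothesis shape -/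
def Mono (M : Finset ι) (v : Fin n → Finset ι → ℝ) : Prop :=
  ∀ i, ∀ S T : Finset ι, S ⊆ T → T ⊆ M → v i S ≤ v i T

def Canc (M : Finset ι) (v : Fin n → Finset ι → ℝ) : Prop :=
  ∀ i, ∀ S T : Finset ι, S ⊆ M → T ⊆ M → ∀ g ∈ M, g ∉ S → g ∉ T →
      v i (insert g S) > v i (insert g T) → v i S > v i T

theorem ins_le (hc : Canc M v) {i : Fin n} {S T : Finset ι} (hS : S ⊆ M) (hT : T ⊆ M)
    {y : ι} (hy : y ∈ M) (hyS : y ∉ S) (hyT : y ∉ T) (h : v i S ≤ v i T) :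
    v i (insert y S) ≤ v i (insert y T) := by
  by_contra hlt
  exact absurd (hc i S T hS hT y hy hyS hyT (lt_of_not_ge hlt)) (not_lt.2 h)

theorem swap_le (hc : Canc M v) {i : Fin n} {x y : ι} (hx : x ∈ M) (hy : y ∈ M)
    (hval : v i {y} ≤ v i {x}) :
    ∀ R : Finset ι, R ⊆ M → x ∉ R → y ∉ R →
      v i (insert y R) ≤ v i (insert x R) := by
  intro R
  induction R using Finset.induction_on with
  | empty => intro _ _ _; simpa using hval
  | @insert z R hzR ih =>
      intro hRM hxR hyR
      have hzM : z ∈ M := hRM (mem_insert_self z R)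
      have hRM' : R ⊆ M := (subset_insert z R).trans hRM
      have hxR' : x ∉ R := fun h => hxR (mem_insert_of_mem h)
      have hyR' : y ∉ R := fun h => hyR (mem_insert_of_mem h)
      have hzx : z ≠ x := fun h => hxR (h ▸ mem_insert_self z R)
      have hzy : z ≠ y := fun h => hyR (h ▸ mem_insert_self z R)
      have h1 : v i (insert y R) ≤ v i (insert x R) := ih hRM' hxR' hyR'
      have h2 := ins_le hc (M := M) (i := i)
        (S := insert y R) (T := insert x R)
        (insert_subset hy hRM') (insert_subset hx hRM') hzM
        (by simp [hzy, hzR]) (by simp [hzx, hzR]) h1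
      calc v i (insert y (insert z R)) = v i (insert z (insert y R)) := by
            rw [Finset.insert_comm]
        _ ≤ v i (insert z (insert x R)) := h2
        _ = v i (insert x (insert z R)) := by rw [Finset.insert_comm]

/-- Removing any element from `insert y Q` where `y` is a least-valuable fresh item gives
value at most `v i Q`. -/
theorem erase_insert_le (hc : Canc M v) {i : Fin n} {Q : Finset ι}
    (hQ : Q ⊆ M) {y : ι} (hy : y ∈ M) (hyQ : y ∉ Q)
    (hfresh : ∀ x ∈ Q, v i {y} ≤ v i {x}) {x : ι} (hx : x ∈ insert y Q) :
    v i ((insert y Q).erase x) ≤ v i Q := by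
  rcases Finset.mem_insert.1 hx with rfl | hxQ
  · rw [Finset.erase_insert hyQ]
  · have hxy : x ≠ y := fun h => hyQ (h ▸ hxQ)
    have : (insert y Q).erase x = insert y (Q.erase x) := by
      rw [Finset.erase_insert_of_ne hxy.symm]
    rw [this]
    have hxM : x ∈ M := hQ hxQ
    have h1 : v i (insert y (Q.erase x)) ≤ v i (insert x (Q.erase x)) :=
      swap_le hc hxM hy (hfresh x hxQ) (Q.erase x) ((erase_subset x Q).trans hQ)
        (notMem_erase x Q) (fun h => hyQ (mem_of_mem_erase h))
    rwa [Finset.insert_erase hxQ] at h1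


def IsAlloc (n : ℕ) (S : Finset ι) (A : Fin n → Finset ι) : Prop :=
  (∀ i, A i ⊆ S) ∧ (∀ g ∈ S, ∃ i, g ∈ A i) ∧ (∀ i j, i ≠ j → Disjoint (A i) (A j))

def IsEFX (v : Fin n → Finset ι → ℝ) (A : Fin n → Finset ι) : Prop :=
  ∀ i j, ∀ g ∈ A j, v i ((A j).erase g) ≤ v i (A i)

def Good (v : Fin n → Finset ι → ℝ) (S : Finset ι) (A : Fin n → Finset ι) : Prop :=
  IsAlloc n S A ∧ IsEFX v A

noncomputable def W (v : Fin n → Finset ι → ℝ) (A : Fin n → Finset ι) : ℝ :=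
  ∑ i, v i (A i)

theorem alloc_comp_perm {S : Finset ι} {A : Fin n → Finset ι} (hA : IsAlloc n S A)
    (σ : Equiv.Perm (Fin n)) : IsAlloc n S (fun i => A (σ i)) := by
  obtain ⟨h1, h2, h3⟩ := hA
  refine ⟨fun i => h1 _, fun g hg => ?_, fun i j hij => h3 _ _ (fun h => hij (σ.injective h))⟩
  obtain ⟨i, hi⟩ := h2 g hg
  exact ⟨σ.symm i, by simpa using hi⟩

theorem good_comp_perm {S : Finset ι} {A : Fin n → Finset ι} (hA : Good v S A)
    (σ : Equiv.Perm (Fin n)) (himp : ∀ i, v i (A i) ≤ v i (A (σ i))) :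
    Good v S (fun i => A (σ i)) := by
  refine ⟨alloc_comp_perm hA.1 σ, fun i j g hg => ?_⟩
  exact le_trans (hA.2 i (σ j) g hg) (himp i)

/-- There is a welfare-maximal good allocation, if any good allocation exists. -/
theorem exists_max_good {S : Finset ι} (hex : ∃ A, Good v S A) :
    ∃ A, Good v S A ∧ ∀ B, Good v S B → W v B ≤ W v A := by
  classical
  have hfin : {A : Fin n → Finset ι | Good v S A}.Finite := by
    apply Set.Finite.subset (Set.Finite.pi (fun _ : Fin n => S.powerset.finite_toSet))
    intro A hA
    intro i _
    simpa using (hA.1.1 i)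
  obtain ⟨A, hA, hmax⟩ := Set.exists_max_image _ (W v) hfin hex
  exact ⟨A, hA, fun B hB => hmax B hB⟩


/-- Rotating along an "envy chain" contradicts welfare-maximality. -/
theorem rot_false {S : Finset ι} {A : Fin n → Finset ι}
    (hA : Good v S A) (hmax : ∀ B, Good v S B → W v B ≤ W v A)
    {l : List (Fin n)} (hne : l ≠ []) (hnd : l.Nodup)
    (hchain : l.Chain' (fun a b => v a (A a) < v a (A b)))
    (hwrap : v (l.getLast hne) (A (l.getLast hne)) < v (l.getLast hne) (A (l.head hne))) :
    False := by
  classical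
  set σ := l.formPerm with hσ
  have hlen : 0 < l.length := List.length_pos_iff.2 hne
  have hstrict : ∀ i ∈ l, v i (A i) < v i (A (σ i)) := by
    intro i hi
    obtain ⟨⟨k, hk⟩, rfl⟩ := List.mem_iff_get.1 hi
    have happ2 : σ (l.get ⟨k, hk⟩) = l.get ⟨(k + 1) % l.length, Nat.mod_lt _ hlen⟩ := by
      simpa [List.get_eq_getElem] using
        (List.formPerm_apply_getElem l hnd k hk :
          σ (l[k]'hk) = l[(k + 1) % l.length]'(Nat.mod_lt _ hlen))
    by_cases hk1 : k + 1 < l.length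
    · have hfin : (⟨(k + 1) % l.length, Nat.mod_lt _ hlen⟩ : Fin l.length) = ⟨k + 1, hk1⟩ :=
        Fin.ext (Nat.mod_eq_of_lt hk1)
      rw [hfin] at happ2
      rw [happ2]
      exact List.isChain_iff_getElem.1 hchain k (by omega)
    · have hmod : (k + 1) % l.length = 0 := by
        have : k + 1 = l.length := by omega
        simp [this]
      have hfin : (⟨(k + 1) % l.length, Nat.mod_lt _ hlen⟩ : Fin l.length) = ⟨0, hlen⟩ :=
        Fin.ext hmod
      rw [hfin] at happ2
      rw [happ2]
      have hk' : k = l.length - 1 := by omega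
      have hkfin : (⟨k, hk⟩ : Fin l.length) = ⟨l.length - 1, by omega⟩ := Fin.mk_eq_mk.2 hk'
      have hlast : l.getLast hne = l.get ⟨k, hk⟩ := by
        rw [hkfin, List.getLast_eq_getElem, List.get_eq_getElem]
      have hhead : l.head hne = l.get ⟨0, hlen⟩ := by
        rw [List.head_eq_getElem, List.get_eq_getElem]
      rw [hlast, hhead] at hwrap
      exact hwrap
  have himp : ∀ i, v i (A i) ≤ v i (A (σ i)) := by
    intro i
    by_cases hi : i ∈ l
    · exact (hstrict i hi).le
    · rw [hσ, List.formPerm_apply_of_notMem hi]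
  have hgood' : Good v S (fun i => A (σ i)) := good_comp_perm hA σ himp
  have hlt : W v A < W v (fun i => A (σ i)) := by
    apply Finset.sum_lt_sum (fun i _ => himp i)
    exact ⟨l.head hne, Finset.mem_univ _, hstrict _ (List.head_mem hne)⟩
  exact absurd (hmax _ hgood') (not_le.2 hlt)

/-- A welfare-maximal good allocation has an unenvied agent. -/
theorem exists_unenvied (hn : 0 < n) {S : Finset ι} {A : Fin n → Finset ι}
    (hA : Good v S A) (hmax : ∀ B, Good v S B → W v B ≤ W v A) :
    ∃ p, ∀ i, v i (A p) ≤ v i (A i) := by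
  classical
  by_contra hcon
  push_neg at hcon
  choose e he using hcon
  -- iterates of e must repeat
  have : ∃ a b : Fin (n+1), a ≠ b ∧ e^[a.1] ⟨0, hn⟩ = e^[b.1] ⟨0, hn⟩ := by
    have hcard : Fintype.card (Fin n) < Fintype.card (Fin (n+1)) := by simp
    obtain ⟨a, b, hab, h⟩ := Fintype.exists_ne_map_eq_of_card_lt
      (fun k : Fin (n+1) => e^[k.1] ⟨0, hn⟩) hcard
    exact ⟨a, b, hab, h⟩
  obtain ⟨a, b, hab, hiter⟩ := this
  -- wlog a < b
  have hex : ∃ c, 0 < c ∧ e^[c] (e^[min a.1 b.1] ⟨0, hn⟩) = e^[min a.1 b.1] ⟨0, hn⟩ := by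
    rcases lt_or_gt_of_ne (fun h => hab (Fin.ext h) : a.1 ≠ b.1) with h | h
    · refine ⟨b.1 - a.1, by omega, ?_⟩
      rw [← Function.iterate_add_apply]
      rw [min_eq_left h.le]
      rw [show b.1 - a.1 + a.1 = b.1 by omega]
      exact hiter.symm
    · refine ⟨a.1 - b.1, by omega, ?_⟩
      rw [← Function.iterate_add_apply]
      rw [min_eq_right h.le]
      rw [show a.1 - b.1 + b.1 = a.1 by omega]
      exact hiter
  set y := e^[min a.1 b.1] ⟨0, hn⟩ with hy
  have hPex : ∃ m, 0 < m ∧ e^[m] y = y := hex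
  set m := Nat.find hPex with hm
  obtain ⟨hmpos, hmy⟩ : 0 < m ∧ e^[m] y = y := Nat.find_spec hPex
  have hinj : ∀ s t, s < m → t < m → e^[s] y = e^[t] y → s = t := by
    intro s t hs ht hst
    by_contra hne
    -- wlog s < t
    have key : ∀ s t, s < t → t < m → e^[s] y = e^[t] y → False := by
      intro s t hlt htm heq
      have h1 : e^[m - t + s] y = y := by
        have : e^[m - t] (e^[t] y) = y := by
          rw [← Function.iterate_add_apply]
          rw [show m - t + t = m by omega]
          exact hmy
        rw [← heq] at this
        rwa [← Function.iterate_add_apply] at this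
      have := Nat.find_min hPex (m := m - t + s) (by omega)
      exact this ⟨by omega, h1⟩
    rcases lt_or_gt_of_ne hne with h | h
    · exact key s t h ht hst
    · exact key t s h hs hst.symm
  -- build the list
  set f : ℕ → Fin n := fun t => e^[t] y with hf
  set l : List (Fin n) := (List.range m).reverse.map f with hl
  have hlen : l.length = m := by simp [hl]
  have hget : ∀ k (hk : k < m), l[k]'(by omega) = f (m - 1 - k) := by
    intro k hk
    simp only [hl, List.getElem_map, List.getElem_reverse, List.getElem_range]
    congr 1
    simp [List.length_range]
  have hne2 : l ≠ [] := by
    intro h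
    rw [h] at hlen
    simp at hlen
    omega
  have hnd : l.Nodup := by
    rw [hl]
    apply List.Nodup.map_on
    · intro s hs t ht hst
      simp only [List.mem_reverse, List.mem_range] at hs ht
      exact hinj s t hs ht hst
    · exact List.nodup_reverse.2 (List.nodup_range)
  have hchain : l.Chain' (fun a b => v a (A a) < v a (A b)) := by
    show List.IsChain _ l
    rw [List.isChain_iff_getElem]
    intro k hk
    show v (l.get ⟨k, by omega⟩) (A (l.get ⟨k, by omega⟩)) <
      v (l.get ⟨k, by omega⟩) (A (l.get ⟨k + 1, by omega⟩))
    have hk' : k < m := by omega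
    have hk1 : k + 1 < m := by omega
    have e1 : l.get ⟨k, by omega⟩ = f (m - 1 - k) := by
      simp only [List.get_eq_getElem]; exact hget k hk'
    have e2 : l.get ⟨k + 1, by omega⟩ = f (m - 1 - (k+1)) := by
      simp only [List.get_eq_getElem]; exact hget (k+1) hk1
    rw [e1, e2]
    have ht : m - 1 - k = (m - 1 - (k+1)) + 1 := by omega
    rw [ht]
    have : f ((m - 1 - (k+1)) + 1) = e (f (m - 1 - (k+1))) := by
      simp [hf, Function.iterate_succ_apply']
    rw [this]
    exact he (f (m - 1 - (k+1)))
  have hwrap : v (l.getLast hne2) (A (l.getLast hne2)) <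
      v (l.getLast hne2) (A (l.head hne2)) := by
    have hlast : l.getLast hne2 = f 0 := by
      rw [List.getLast_eq_getElem]
      have := hget (l.length - 1) (by omega)
      rw [this]
      congr 1
      omega
    have hhead : l.head hne2 = f (m - 1) := by
      rw [List.head_eq_getElem]
      have := hget 0 (by omega)
      rw [this]
      simp
    have hy0 : f 0 = y := by simp [hf]
    have hfm : e (f (m - 1)) = y := by
      have h1 : e (f (m - 1)) = f ((m - 1) + 1) := by
        simp only [hf]
        exact (Function.iterate_succ_apply' e (m - 1) y).symm
      have h2 : (m - 1) + 1 = m := by omega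
      rw [h1, h2]
      exact hmy
    rw [hlast, hhead, hy0, ← hfm]
    exact he (f (m - 1))
  exact rot_false hA hmax hne2 hnd hchain hwrap


theorem alloc_insert {S : Finset ι} {A : Fin n → Finset ι} (hA : IsAlloc n S A)
    {x : ι} (hx : x ∉ S) (p : Fin n) :
    IsAlloc n (insert x S) (Function.update A p (insert x (A p))) := by
  obtain ⟨h1, h2, h3⟩ := hA
  refine ⟨?_, ?_, ?_⟩
  · intro i
    by_cases hip : i = p
    · rw [hip, Function.update_self]
      exact insert_subset_insert _ (h1 p)
    · rw [Function.update_of_ne hip]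
      exact (h1 i).trans (subset_insert _ _)
  · intro g hg
    rcases mem_insert.1 hg with rfl | hgS
    · exact ⟨p, by simp⟩
    · obtain ⟨i, hi⟩ := h2 g hgS
      by_cases hip : i = p
      · refine ⟨p, ?_⟩
        rw [Function.update_self]
        exact mem_insert_of_mem (hip ▸ hi)
      · exact ⟨i, by simpa [Function.update_of_ne hip] using hi⟩
  · intro i j hij
    have hdisj := h3 i j hij
    by_cases hip : i = p
    · have hjp : j ≠ p := fun h => hij (hip.trans h.symm)
      rw [hip, Function.update_self, Function.update_of_ne hjp]
      rw [Finset.disjoint_insert_left]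
      exact ⟨fun h => hx (h1 j h), hip ▸ hdisj⟩
    · rw [Function.update_of_ne hip]
      by_cases hjp : j = p
      · subst hjp
        rw [Function.update_self, Finset.disjoint_insert_right]
        exact ⟨fun h => hx (h1 i h), hdisj⟩
      · rw [Function.update_of_ne hjp]; exact hdisj

/-- Giving a fresh least-valuable item to an unenvied agent preserves goodness. -/
theorem step_single (hm : Mono M v) (hc : Canc M v) {S : Finset ι} (hSM : S ⊆ M)
    {A : Fin n → Finset ι} (hA : Good v S A) {p : Fin n}
    (hp : ∀ i, v i (A p) ≤ v i (A i)) {g : ι} (hg : g ∈ M) (hgS : g ∉ S)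
    (hfresh : ∀ i x, x ∈ S → v i {g} ≤ v i {x}) :
    Good v (insert g S) (Function.update A p (insert g (A p))) := by
  obtain ⟨hAl, hAe⟩ := hA
  refine ⟨alloc_insert hAl hgS p, ?_⟩
  intro i j x hx
  set F := Function.update A p (insert g (A p)) with hF
  have hFi : v i (A i) ≤ v i (F i) := by
    by_cases hip : i = p
    · rw [hip, hF, Function.update_self]
      exact hm p _ _ (subset_insert _ _) (insert_subset hg ((hAl.1 p).trans hSM))
    · rw [hF, Function.update_of_ne hip]
  by_cases hjp : j = p
  · rw [hF, hjp, Function.update_self] at hx ⊢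
    have h1 : v i ((insert g (A p)).erase x) ≤ v i (A p) :=
      erase_insert_le hc ((hAl.1 p).trans hSM) hg (fun h => hgS (hAl.1 p h))
        (fun y hy => hfresh i y (hAl.1 p hy)) hx
    exact h1.trans ((hp i).trans hFi)
  · rw [hF, Function.update_of_ne hjp] at hx ⊢
    exact (hAe i j x hx).trans hFi


/-- extract a chain prefix ending at a given member -/
theorem chain_prefix {α : Type*} {rel : α → α → Prop} {l : List α} (hne : l ≠ [])
    (hnd : l.Nodup) (hchain : l.Chain' rel) {q : α} (hq : q ∈ l) :
    ∃ (l' : List α) (hne' : l' ≠ []), l'.Nodup ∧ l'.Chain' rel ∧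
      l'.head hne' = l.head hne ∧ l'.getLast hne' = q ∧ ∀ x ∈ l', x ∈ l := by
  obtain ⟨k, hk, rfl⟩ := List.getElem_of_mem hq
  refine ⟨l.take (k+1), ?_, ?_, hchain.take _, ?_, ?_, ?_⟩
  · have : (l.take (k+1)).length = k+1 := by
      rw [List.length_take]; omega
    intro hcon; rw [hcon] at this; simp at this
  · exact (List.take_sublist _ _).nodup hnd
  · rw [List.head_eq_getElem, List.head_eq_getElem]
    exact List.getElem_take ..
  · have hlen : (l.take (k+1)).length = k+1 := by rw [List.length_take]; omega
    rw [List.getLast_eq_getElem]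
    have h0 : (l.take (k+1))[(l.take (k+1)).length - 1]'(by omega) =
        l[(l.take (k+1)).length - 1]'(by rw [hlen]; omega) := List.getElem_take ..
    rw [h0]
    have : (l.take (k+1)).length - 1 = k := by omega
    simp only [this]
  · intro x hx; exact (List.take_sublist _ _).mem hx


theorem formPerm_step {α : Type*} [DecidableEq α] (L : List α) (hnd : L.Nodup)
    (k : ℕ) (hk : k + 1 < L.length) :
    L.formPerm (L.get ⟨k, by omega⟩) = L.get ⟨k + 1, hk⟩ := by
  have hlen : 0 < L.length := by omega
  have happ : L.formPerm (L[k]'(by omega)) = L[(k + 1) % L.length]'(Nat.mod_lt _ hlen) :=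
    List.formPerm_apply_getElem L hnd k (by omega)
  have happ2 : L.formPerm (L.get ⟨k, by omega⟩) =
      L.get ⟨(k + 1) % L.length, Nat.mod_lt _ hlen⟩ := by
    simpa [List.get_eq_getElem] using happ
  have hfin : (⟨(k + 1) % L.length, Nat.mod_lt _ hlen⟩ : Fin L.length) = ⟨k + 1, hk⟩ :=
    Fin.mk_eq_mk.2 (Nat.mod_eq_of_lt hk)
  rw [hfin] at happ2
  exact happ2


/-- Final allocation construction: rotate along `σ`, give `g` on top of `A p` to `c₀`,
and give `A d` plus `h` to `p`. -/
theorem final_alloc (hm : Mono M v) (hc : Canc M v) {S : Finset ι} (hSM : S ⊆ M)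
    {A : Fin n → Finset ι} (hA : Good v S A)
    {g h : ι} (hg : g ∈ M) (hh : h ∈ M) (hgh : g ≠ h) (hgS : g ∉ S) (hhS : h ∉ S)
    (freshg : ∀ i x, x ∈ S → v i {g} ≤ v i {x})
    (freshh : ∀ i x, x ∈ S → v i {h} ≤ v i {x})
    {p c₀ d : Fin n} (σ : Equiv.Perm (Fin n))
    (hc₀p : c₀ ≠ p) (hσc₀ : σ c₀ = p) (hσp : σ p = d)
    (himp : ∀ i, i ≠ p → i ≠ c₀ → v i (A i) ≤ v i (A (σ i)))
    (hp : ∀ i, v i (A p) ≤ v i (A i))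
    (hNoEnv : ∀ i, i ≠ p → v i (A d) ≤ v i (A i))
    (hpd : v p (A p) ≤ v p (A d))
    (hc₀v : v c₀ (A c₀) ≤ v c₀ (insert g (A p))) :
    ∃ F, Good v (insert h (insert g S)) F := by
  have hAM : ∀ i, A i ⊆ M := fun i => (hA.1.1 i).trans hSM
  set B : Fin n → Finset ι := fun i => A (σ i) with hB
  have hBalloc : IsAlloc n S B := alloc_comp_perm hA.1 σ
  have hBc₀ : B c₀ = A p := by rw [hB]; simp only [hσc₀]
  have hBp : B p = A d := by rw [hB]; simp only [hσp]
  set F : Fin n → Finset ι :=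
    Function.update (Function.update B c₀ (insert g (A p))) p (insert h (A d)) with hF
  have hFc₀ : F c₀ = insert g (A p) := by
    rw [hF, Function.update_of_ne hc₀p, Function.update_self]
  have hFp : F p = insert h (A d) := by rw [hF, Function.update_self]
  have hFout : ∀ i, i ≠ p → i ≠ c₀ → F i = A (σ i) := by
    intro i hip hic
    rw [hF, Function.update_of_ne hip, Function.update_of_ne hic, hB]
  refine ⟨F, ?_, ?_⟩
  · have a1 : IsAlloc n (insert g S)
        (Function.update B c₀ (insert g (B c₀))) := alloc_insert hBalloc hgS c₀
    rw [hBc₀] at a1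
    have hhgS : h ∉ insert g S := by
      rw [Finset.mem_insert]; push_neg; exact ⟨hgh.symm, hhS⟩
    have a2 := alloc_insert a1 hhgS p
    have hmid : (Function.update B c₀ (insert g (A p))) p = A d := by
      rw [Function.update_of_ne (Ne.symm hc₀p), hBp]
    rw [hmid] at a2
    exact a2
  · have hFi : ∀ i, v i (A i) ≤ v i (F i) := by
      intro i
      by_cases hip : i = p
      · rw [hip, hFp]
        exact le_trans hpd (hm p _ _ (subset_insert _ _) (insert_subset hh (hAM d)))
      · by_cases hic : i = c₀
        · rw [hic, hFc₀]
          exact hic ▸ hc₀v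
        · rw [hFout i hip hic]
          exact himp i hip hic
    intro i j x hx
    by_cases hjp : j = p
    · rw [hjp, hFp] at hx ⊢
      have h1 : v i ((insert h (A d)).erase x) ≤ v i (A d) :=
        erase_insert_le hc (hAM d) hh (fun hcon => hhS (hA.1.1 d hcon))
          (fun y hy => freshh i y (hA.1.1 d hy)) hx
      by_cases hip : i = p
      · rw [hip] at h1 ⊢
        rw [hFp]
        exact h1.trans (hm p _ _ (subset_insert _ _) (insert_subset hh (hAM d)))
      · exact h1.trans ((hNoEnv i hip).trans (hFi i))
    · by_cases hjc : j = c₀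
      · rw [hjc, hFc₀] at hx ⊢
        have h1 : v i ((insert g (A p)).erase x) ≤ v i (A p) :=
          erase_insert_le hc (hAM p) hg (fun hcon => hgS (hA.1.1 p hcon))
            (fun y hy => freshg i y (hA.1.1 p hy)) hx
        exact h1.trans ((hp i).trans (hFi i))
      · rw [hFout j hjp hjc] at hx ⊢
        exact (hA.2 i (σ j) x hx).trans (hFi i)

theorem formPerm_cons_getLast {α : Type*} [DecidableEq α] (p : α) (l : List α)
    (hne : l ≠ []) : (p :: l).formPerm (l.getLast hne) = p := by
  have h2 := List.formPerm_apply_getLast p l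
  rwa [List.getLast_cons hne] at h2

theorem formPerm_cons_head {α : Type*} [DecidableEq α] (p : α) (l : List α)
    (hne : l ≠ []) (hnd : (p :: l).Nodup) : (p :: l).formPerm p = l.head hne := by
  cases l with
  | nil => exact absurd rfl hne
  | cons a t =>
      rw [List.head_cons]
      exact List.formPerm_apply_head p a t hnd

theorem formPerm_cons_chain {α : Type*} [DecidableEq α] {rel : α → α → Prop} (p : α)
    (l : List α) (hnd : (p :: l).Nodup) (hchain : l.Chain' rel) (hne : l ≠ []) :
    ∀ i ∈ l, i ≠ l.getLast hne → rel i ((p :: l).formPerm i) := by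
  intro i hil hic
  obtain ⟨⟨k, hk⟩, rfl⟩ := List.mem_iff_get.1 hil
  have hkne : k ≠ l.length - 1 := by
    intro hcon
    apply hic
    have hfin : (⟨k, hk⟩ : Fin l.length) = ⟨l.length - 1, by omega⟩ := Fin.mk_eq_mk.2 hcon
    rw [hfin, List.getLast_eq_getElem, List.get_eq_getElem]
  have hk1 : k + 1 < l.length := by omega
  have h1 := formPerm_step (p :: l) hnd (k + 1) (by simp only [List.length_cons]; omega)
  have e1 : (p :: l).get ⟨k + 1, by simp only [List.length_cons]; omega⟩ = l.get ⟨k, hk⟩ := by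
    simp only [List.get_eq_getElem, List.getElem_cons_succ]
  have e2 : (p :: l).get ⟨k + 1 + 1, by simp only [List.length_cons]; omega⟩ =
      l.get ⟨k + 1, hk1⟩ := by
    simp only [List.get_eq_getElem, List.getElem_cons_succ]
  rw [e1, e2] at h1
  rw [h1]
  exact List.isChain_iff_getElem.1 hchain k (by omega)


/-- The chain construction for the hard case of a pair tier. -/
theorem step_pair_chain (hm : Mono M v) (hc : Canc M v) {S : Finset ι} (hSM : S ⊆ M)
    {A : Fin n → Finset ι} (hA : Good v S A)
    (hmax : ∀ B, Good v S B → W v B ≤ W v A)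
    {p : Fin n} (hp : ∀ i, v i (A p) ≤ v i (A i))
    (hENV : ∀ q, q ≠ p → ∃ i, v i (A i) < v i (A q))
    {g h : ι} (hg : g ∈ M) (hh : h ∈ M) (hgh : g ≠ h) (hgS : g ∉ S) (hhS : h ∉ S)
    (freshg : ∀ i x, x ∈ S → v i {g} ≤ v i {x})
    (freshh : ∀ i x, x ∈ S → v i {h} ≤ v i {x})
    {c₀ : Fin n} (hc₀p : c₀ ≠ p) (hc₀ : v c₀ (A c₀) < v c₀ (insert g (A p))) :
    ∃ F, Good v (insert h (insert g S)) F := by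
  classical
  have KEY : ∀ fuel (l : List (Fin n)) (hne : l ≠ []), l.Nodup → p ∉ l →
      l.Chain' (fun a b => v a (A a) < v a (A b)) → l.getLast hne = c₀ →
      n ≤ l.length + fuel → ∃ F, Good v (insert h (insert g S)) F := by
    intro fuel
    induction fuel with
    | zero =>
        intro l hne hnd hpl _ _ hlen
        exfalso
        have h1 : l.toFinset ⊆ Finset.univ.erase p := by
          intro x hx
          rw [Finset.mem_erase]
          exact ⟨fun hxp => hpl (hxp ▸ (List.mem_toFinset.1 hx)), Finset.mem_univ _⟩
        have h2 := Finset.card_le_card h1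
        rw [List.toFinset_card_of_nodup hnd] at h2
        have h3 : (Finset.univ.erase p).card = n - 1 := by
          rw [Finset.card_erase_of_mem (Finset.mem_univ _)]
          simp
        have hn1 : 1 ≤ n := Fin.pos p
        omega
    | succ fuel ih =>
        intro l hne hnd hpl hchain hlast hlen
        by_cases hq : ∃ q, q ∉ l ∧ q ≠ p ∧ v q (A q) < v q (A (l.head hne))
        · obtain ⟨q, hql, hqp, hqd⟩ := hq
          refine ih (q :: l) (List.cons_ne_nil _ _) (List.nodup_cons.2 ⟨hql, hnd⟩)
            (by simp only [List.mem_cons]; push_neg; exact ⟨Ne.symm hqp, hpl⟩) ?_ ?_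
            (by simp only [List.length_cons]; omega)
          · show List.IsChain _ (q :: l)
            rw [List.isChain_cons]
            refine ⟨fun y hy => ?_, hchain⟩
            rw [List.head?_eq_head hne] at hy
            cases hy
            exact hqd
          · rw [List.getLast_cons hne]
            exact hlast
        · push_neg at hq
          by_cases hcyc : ∃ q ∈ l, v q (A q) < v q (A (l.head hne))
          · exfalso
            obtain ⟨q, hql, hqd⟩ := hcyc
            obtain ⟨l', hne', hnd', hchain', hhead', hlast', _⟩ :=
              chain_prefix hne hnd hchain hql
            exact rot_false hA hmax hne' hnd' hchain'
              (by rw [hlast', hhead']; exact hqd)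
          · push_neg at hcyc
            have hdl : l.head hne ∈ l := List.head_mem hne
            have hdp : l.head hne ≠ p := fun hcon => hpl (hcon ▸ hdl)
            have hpd : v p (A p) < v p (A (l.head hne)) := by
              obtain ⟨i0, hi0⟩ := hENV (l.head hne) hdp
              by_cases hi0p : i0 = p
              · exact hi0p ▸ hi0
              · exfalso
                by_cases hi0l : i0 ∈ l
                · exact absurd hi0 (not_lt.2 (hcyc i0 hi0l))
                · exact absurd hi0 (not_lt.2 (hq i0 hi0l hi0p))
            have hNoEnv : ∀ i, i ≠ p → v i (A (l.head hne)) ≤ v i (A i) := by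
              intro i hip
              by_contra hcon
              push_neg at hcon
              by_cases hil : i ∈ l
              · exact absurd hcon (not_lt.2 (hcyc i hil))
              · exact absurd hcon (not_lt.2 (hq i hil hip))
            have hLnd : (p :: l).Nodup := List.nodup_cons.2 ⟨hpl, hnd⟩
            have hσc₀ : (p :: l).formPerm c₀ = p := by
              have := formPerm_cons_getLast p l hne
              rwa [hlast] at this
            have hσp : (p :: l).formPerm p = l.head hne := formPerm_cons_head p l hne hLnd
            have himp : ∀ i, i ≠ p → i ≠ c₀ →
                v i (A i) ≤ v i (A ((p :: l).formPerm i)) := by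
              intro i hip hic
              by_cases hil : i ∈ l
              · exact (formPerm_cons_chain p l hLnd hchain hne i hil
                  (by rw [hlast]; exact hic)).le
              · rw [List.formPerm_apply_of_notMem (by
                  simp only [List.mem_cons]; push_neg; exact ⟨hip, hil⟩)]
            exact final_alloc hm hc hSM hA hg hh hgh hgS hhS freshg freshh
              ((p :: l).formPerm) hc₀p hσc₀ hσp himp hp hNoEnv hpd.le hc₀.le
  have hne0 : ([c₀] : List (Fin n)) ≠ [] := by simp
  refine KEY n [c₀] hne0 (by simp) ?_ (List.isChain_singleton _) (by simp) (by simp)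
  simp only [List.mem_singleton]
  exact Ne.symm hc₀p


/-- removing one element from `Q ∪ {g,h}` is dominated by `Q∪{g}` or `Q∪{h}` -/
theorem erase_two_le (hc : Canc M v) {i : Fin n} {Q : Finset ι} (hQ : Q ⊆ M)
    {g h : ι} (hg : g ∈ M) (hh : h ∈ M) (hgh : g ≠ h) (hgQ : g ∉ Q) (hhQ : h ∉ Q)
    (freshh : ∀ x ∈ Q, v i {h} ≤ v i {x})
    {x : ι} (hx : x ∈ insert h (insert g Q)) :
    v i ((insert h (insert g Q)).erase x) ≤ v i (insert g Q) ∨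
    v i ((insert h (insert g Q)).erase x) ≤ v i (insert h Q) := by
  have hhgQ : h ∉ insert g Q := by
    rw [Finset.mem_insert]; push_neg; exact ⟨hgh.symm, hhQ⟩
  rcases Finset.mem_insert.1 hx with rfl | hx'
  · left; rw [Finset.erase_insert hhgQ]
  rcases Finset.mem_insert.1 hx' with rfl | hxQ
  · right
    have hcomm : insert h (insert x Q) = insert x (insert h Q) := Finset.insert_comm _ _ _
    rw [hcomm, Finset.erase_insert (by
      rw [Finset.mem_insert]; push_neg; exact ⟨hgh, hgQ⟩)]
  · left
    have hxg : x ≠ g := fun hcon => hgQ (hcon ▸ hxQ)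
    have hxh : x ≠ h := fun hcon => hhQ (hcon ▸ hxQ)
    have e1 : (insert h (insert g Q)).erase x = insert h (insert g (Q.erase x)) := by
      rw [Finset.erase_insert_of_ne hxh.symm, Finset.erase_insert_of_ne hxg.symm]
    rw [e1]
    have h1 : v i (insert h (insert g (Q.erase x))) ≤ v i (insert x (insert g (Q.erase x))) :=
      swap_le hc (hQ hxQ) hh (freshh x hxQ) _
        (insert_subset hg ((erase_subset x Q).trans hQ))
        (by rw [Finset.mem_insert]; push_neg;
            exact ⟨hxg, notMem_erase x Q⟩)
        (by rw [Finset.mem_insert]; push_neg;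
            exact ⟨hgh.symm, fun hcon => hhQ (mem_of_mem_erase hcon)⟩)
    have e2 : insert x (insert g (Q.erase x)) = insert g Q := by
      rw [Finset.insert_comm, Finset.insert_erase hxQ]
    rwa [e2] at h1

/-- pair step, case of two unenvied agents -/
theorem step_pair_two (hm : Mono M v) (hc : Canc M v) {S : Finset ι} (hSM : S ⊆ M)
    {A : Fin n → Finset ι} (hA : Good v S A)
    {p q : Fin n} (hpq : p ≠ q) (hp : ∀ i, v i (A p) ≤ v i (A i))
    (hq : ∀ i, v i (A q) ≤ v i (A i))
    {g h : ι} (hg : g ∈ M) (hh : h ∈ M) (hgh : g ≠ h) (hgS : g ∉ S) (hhS : h ∉ S)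
    (freshg : ∀ i x, x ∈ S → v i {g} ≤ v i {x})
    (freshh : ∀ i x, x ∈ S → v i {h} ≤ v i {x}) :
    ∃ F, Good v (insert h (insert g S)) F := by
  have hAM : ∀ i, A i ⊆ M := fun i => (hA.1.1 i).trans hSM
  set A1 : Fin n → Finset ι := Function.update A p (insert g (A p)) with hA1
  have hA1q : A1 q = A q := by rw [hA1, Function.update_of_ne (Ne.symm hpq)]
  set F : Fin n → Finset ι := Function.update A1 q (insert h (A1 q)) with hF
  have hFq : F q = insert h (A q) := by rw [hF, Function.update_self, hA1q]
  have hFp : F p = insert g (A p) := by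
    rw [hF, Function.update_of_ne hpq, hA1, Function.update_self]
  have hFout : ∀ j, j ≠ p → j ≠ q → F j = A j := by
    intro j hjp hjq
    rw [hF, Function.update_of_ne hjq, hA1, Function.update_of_ne hjp]
  refine ⟨F, ?_, ?_⟩
  · have a1 : IsAlloc n (insert g S) A1 := alloc_insert hA.1 hgS p
    have hhgS : h ∉ insert g S := by
      rw [Finset.mem_insert]; push_neg; exact ⟨hgh.symm, hhS⟩
    exact alloc_insert a1 hhgS q
  · have hFi : ∀ i, v i (A i) ≤ v i (F i) := by
      intro i
      by_cases hip : i = p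
      · rw [hip, hFp]
        exact hm p _ _ (subset_insert _ _) (insert_subset hg (hAM p))
      · by_cases hiq : i = q
        · rw [hiq, hFq]
          exact hm q _ _ (subset_insert _ _) (insert_subset hh (hAM q))
        · rw [hFout i hip hiq]
    intro i j x hx
    by_cases hjq : j = q
    · rw [hjq, hFq] at hx ⊢
      have h1 : v i ((insert h (A q)).erase x) ≤ v i (A q) :=
        erase_insert_le hc (hAM q) hh (fun hcon => hhS (hA.1.1 q hcon))
          (fun y hy => freshh i y (hA.1.1 q hy)) hx
      exact h1.trans ((hq i).trans (hFi i))
    · by_cases hjp : j = p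
      · rw [hjp, hFp] at hx ⊢
        have h1 : v i ((insert g (A p)).erase x) ≤ v i (A p) :=
          erase_insert_le hc (hAM p) hg (fun hcon => hgS (hA.1.1 p hcon))
            (fun y hy => freshg i y (hA.1.1 p hy)) hx
        exact h1.trans ((hp i).trans (hFi i))
      · rw [hFout j hjp hjq] at hx ⊢
        exact (hA.2 i j x hx).trans (hFi i)

/-- pair step, co-location case -/
theorem step_pair_coloc (hm : Mono M v) (hc : Canc M v) {S : Finset ι} (hSM : S ⊆ M)
    {A : Fin n → Finset ι} (hA : Good v S A)
    {p : Fin n} (hp : ∀ i, v i (A p) ≤ v i (A i))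
    {g h : ι} (hg : g ∈ M) (hh : h ∈ M) (hgh : g ≠ h) (hgS : g ∉ S) (hhS : h ∉ S)
    (freshh : ∀ i x, x ∈ S → v i {h} ≤ v i {x})
    (hcol : ∀ i, i ≠ p → v i (insert g (A p)) ≤ v i (A i) ∧ v i (insert h (A p)) ≤ v i (A i)) :
    ∃ F, Good v (insert h (insert g S)) F := by
  have hAM : ∀ i, A i ⊆ M := fun i => (hA.1.1 i).trans hSM
  have hgAp : g ∉ A p := fun hcon => hgS (hA.1.1 p hcon)
  have hhAp : h ∉ A p := fun hcon => hhS (hA.1.1 p hcon)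
  set A1 : Fin n → Finset ι := Function.update A p (insert g (A p)) with hA1
  have hA1p : A1 p = insert g (A p) := by rw [hA1, Function.update_self]
  set F : Fin n → Finset ι := Function.update A1 p (insert h (A1 p)) with hF
  have hFp : F p = insert h (insert g (A p)) := by
    rw [hF, Function.update_self, hA1p]
  have hFout : ∀ j, j ≠ p → F j = A j := by
    intro j hjp
    rw [hF, Function.update_of_ne hjp, hA1, Function.update_of_ne hjp]
  have hFpM : insert h (insert g (A p)) ⊆ M :=
    insert_subset hh (insert_subset hg (hAM p))
  refine ⟨F, ?_, ?_⟩
  · have a1 : IsAlloc n (insert g S) A1 := alloc_insert hA.1 hgS p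
    have hhgS : h ∉ insert g S := by
      rw [Finset.mem_insert]; push_neg; exact ⟨hgh.symm, hhS⟩
    exact alloc_insert a1 hhgS p
  · have hFi : ∀ i, v i (A i) ≤ v i (F i) := by
      intro i
      by_cases hip : i = p
      · rw [hip, hFp]
        exact hm p _ _ ((subset_insert _ _).trans (subset_insert _ _)) hFpM
      · rw [hFout i hip]
    intro i j x hx
    by_cases hjp : j = p
    · rw [hjp, hFp] at hx ⊢
      by_cases hip : i = p
      · rw [hip, hFp]
        exact hm p _ _ (erase_subset _ _) hFpM
      · have h1 := erase_two_le hc (hAM p) hg hh hgh hgAp hhAp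
          (fun y hy => freshh i y (hA.1.1 p hy)) hx
        rcases h1 with h1 | h1
        · exact h1.trans (((hcol i hip).1).trans (hFi i))
        · exact h1.trans (((hcol i hip).2).trans (hFi i))
    · rw [hFout j hjp] at hx ⊢
      exact (hA.2 i j x hx).trans (hFi i)

/-- master single step -/
theorem step_single_max (hm : Mono M v) (hc : Canc M v) {S : Finset ι} (hSM : S ⊆ M)
    (hn : 0 < n) (hex : ∃ A, Good v S A) {g : ι} (hg : g ∈ M) (hgS : g ∉ S)
    (freshg : ∀ i x, x ∈ S → v i {g} ≤ v i {x}) :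
    ∃ A, Good v (insert g S) A := by
  obtain ⟨A, hA, hmax⟩ := exists_max_good hex
  obtain ⟨p, hp⟩ := exists_unenvied hn hA hmax
  exact ⟨_, step_single hm hc hSM hA hp hg hgS freshg⟩

/-- master pair step -/
theorem step_pair (hm : Mono M v) (hc : Canc M v) {S : Finset ι} (hSM : S ⊆ M)
    (hn : 0 < n) (hex : ∃ A, Good v S A)
    {g h : ι} (hg : g ∈ M) (hh : h ∈ M) (hgh : g ≠ h) (hgS : g ∉ S) (hhS : h ∉ S)
    (freshg : ∀ i x, x ∈ S → v i {g} ≤ v i {x})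
    (freshh : ∀ i x, x ∈ S → v i {h} ≤ v i {x}) :
    ∃ F, Good v (insert h (insert g S)) F := by
  obtain ⟨A, hA, hmax⟩ := exists_max_good hex
  obtain ⟨p, hp⟩ := exists_unenvied hn hA hmax
  by_cases h2 : ∃ q, q ≠ p ∧ ∀ i, v i (A q) ≤ v i (A i)
  · obtain ⟨q, hqp, hq⟩ := h2
    exact step_pair_two hm hc hSM hA (Ne.symm hqp) hp hq hg hh hgh hgS hhS freshg freshh
  · push_neg at h2
    have hENV : ∀ q, q ≠ p → ∃ i, v i (A i) < v i (A q) := by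
      intro q hqp
      obtain ⟨i, hi⟩ := h2 q hqp
      exact ⟨i, hi⟩
    by_cases h3 : ∀ i, i ≠ p →
        v i (insert g (A p)) ≤ v i (A i) ∧ v i (insert h (A p)) ≤ v i (A i)
    · exact step_pair_coloc hm hc hSM hA hp hg hh hgh hgS hhS freshh h3
    · push_neg at h3
      obtain ⟨c₀, hc₀p, hc₀⟩ := h3
      by_cases hP : v c₀ (insert g (A p)) ≤ v c₀ (A c₀)
      · have hres := step_pair_chain hm hc hSM hA hmax hp hENV hh hg (Ne.symm hgh) hhS hgS
          freshh freshg hc₀p (hc₀ hP)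
        rwa [Finset.insert_comm] at hres
      · exact step_pair_chain hm hc hSM hA hmax hp hENV hg hh hgh hgS hhS freshg freshh
          hc₀p (lt_of_not_ge hP)

end EFXAux

open EFXAux in
/-- If `n ≥ 3` agents have monotone, nonnegative, cancelable valuations and share a common
tiered ranking of the items with tiers of size at most 2, then an EFX complete allocation
exists. -/
theorem efx_exists_tiers_of_size_two {ι : Type*} [DecidableEq ι] (n : ℕ) (hn : 3 ≤ n)
    (M : Finset ι) (v : Fin n → Finset ι → ℝ)
    (hmono : ∀ i, ∀ S T : Finset ι, S ⊆ T → T ⊆ M → v i S ≤ v i T)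
    (hnonneg : ∀ i, ∀ S : Finset ι, S ⊆ M → 0 ≤ v i S)
    (hempty : ∀ i, v i ∅ = 0)
    (hcanc : ∀ i, ∀ S T : Finset ι, S ⊆ M → T ⊆ M → ∀ g ∈ M, g ∉ S → g ∉ T →
      v i (insert g S) > v i (insert g T) → v i S > v i T)
    (s : ℕ) (Mt : Fin s → Finset ι)
    (htsub : ∀ j, Mt j ⊆ M)
    (htcover : ∀ g ∈ M, ∃ j, g ∈ Mt j)
    (htdisj : ∀ j k, j ≠ k → Disjoint (Mt j) (Mt k))
    (htsize : ∀ j, (Mt j).card ≤ 2)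
    (horder : ∀ i, ∀ j k : Fin s, j < k → ∀ g ∈ Mt j, ∀ h ∈ Mt k, v i {h} ≤ v i {g}) :
    ∃ A : Fin n → Finset ι,
      (∀ i, A i ⊆ M) ∧
      (∀ g ∈ M, ∃ i, g ∈ A i) ∧
      (∀ i j, i ≠ j → Disjoint (A i) (A j)) ∧
      (∀ i j, ∀ g ∈ A j, v i ((A j).erase g) ≤ v i (A i)) := by

  classical
  have hn0 : 0 < n := by omega
  set St : ℕ → Finset ι :=
    fun t => (Finset.univ.filter fun j : Fin s => (j : ℕ) < t).biUnion Mt with hSt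
  have hmem : ∀ x t, x ∈ St t ↔ ∃ j : Fin s, (j : ℕ) < t ∧ x ∈ Mt j := by
    intro x t
    simp only [hSt, Finset.mem_biUnion, Finset.mem_filter, Finset.mem_univ, true_and]
  have hStM : ∀ t, St t ⊆ M := by
    intro t x hx
    obtain ⟨j, _, hj⟩ := (hmem x t).1 hx
    exact htsub j hj
  have key : ∀ t, ∃ A, Good v (St t) A := by
    intro t
    induction t with
    | zero =>
        refine ⟨fun _ => ∅, ⟨fun i => empty_subset _, fun x hx => ?_, fun i j _ => ?_⟩, ?_⟩
        · obtain ⟨j, hj, _⟩ := (hmem x 0).1 hx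
          omega
        · simp
        · intro i j x hx
          simp at hx
    | succ t ih =>
        by_cases hts : t < s
        · have hsplit : St (t + 1) = St t ∪ Mt ⟨t, hts⟩ := by
            ext x
            rw [Finset.mem_union, hmem, hmem]
            constructor
            · rintro ⟨j, hj1, hj2⟩
              by_cases hjt : (j : ℕ) < t
              · exact Or.inl ⟨j, hjt, hj2⟩
              · have : j = ⟨t, hts⟩ := by
                  apply Fin.ext
                  simp only [Fin.val_mk]
                  omega
                exact Or.inr (this ▸ hj2)
            · rintro (⟨j, hj1, hj2⟩ | hx)
              · exact ⟨j, by omega, hj2⟩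
              · exact ⟨⟨t, hts⟩, by simp, hx⟩
          have hfreshT : ∀ y ∈ Mt ⟨t, hts⟩, ∀ i x, x ∈ St t → v i {y} ≤ v i {x} := by
            intro y hy i x hx
            obtain ⟨j, hj1, hj2⟩ := (hmem x t).1 hx
            exact horder i j ⟨t, hts⟩ (by rw [Fin.lt_def]; exact hj1) x hj2 y hy
          have hTout : ∀ y ∈ Mt ⟨t, hts⟩, y ∉ St t := by
            intro y hy hcon
            obtain ⟨j, hj1, hj2⟩ := (hmem y t).1 hcon
            have hne : j ≠ ⟨t, hts⟩ := by
              intro hcon2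
              rw [hcon2] at hj1
              simp at hj1
            exact Finset.disjoint_left.1 (htdisj j ⟨t, hts⟩ hne) hj2 hy
          have hcard := htsize ⟨t, hts⟩
          interval_cases hc : (Mt ⟨t, hts⟩).card
          · have hT : Mt ⟨t, hts⟩ = ∅ := Finset.card_eq_zero.1 hc
            rw [hsplit, hT, Finset.union_empty]
            exact ih
          · obtain ⟨g, hT⟩ := Finset.card_eq_one.1 hc
            have hgT : g ∈ Mt ⟨t, hts⟩ := by rw [hT]; exact mem_singleton_self g
            have hsplit2 : St (t + 1) = insert g (St t) := by
              rw [hsplit, hT]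
              ext x
              simp only [Finset.mem_union, Finset.mem_insert, Finset.mem_singleton]
              tauto
            rw [hsplit2]
            exact step_single_max hmono hcanc (hStM t) hn0 ih (htsub _ hgT)
              (hTout g hgT) (fun i x hx => hfreshT g hgT i x hx)
          · obtain ⟨g, h, hgh, hT⟩ := Finset.card_eq_two.1 hc
            have hgT : g ∈ Mt ⟨t, hts⟩ := by rw [hT]; simp
            have hhT : h ∈ Mt ⟨t, hts⟩ := by rw [hT]; simp
            have hsplit2 : St (t + 1) = insert h (insert g (St t)) := by
              rw [hsplit, hT]
              ext x
              simp only [Finset.mem_union, Finset.mem_insert, Finset.mem_singleton]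
              tauto
            rw [hsplit2]
            exact step_pair hmono hcanc (hStM t) hn0 ih (htsub _ hgT) (htsub _ hhT)
              hgh (hTout g hgT) (hTout h hhT)
              (fun i x hx => hfreshT g hgT i x hx) (fun i x hx => hfreshT h hhT i x hx)
        · have hsplit : St (t + 1) = St t := by
            ext x
            rw [hmem, hmem]
            constructor
            · rintro ⟨j, hj1, hj2⟩
              exact ⟨j, by have := j.isLt; omega, hj2⟩
            · rintro ⟨j, hj1, hj2⟩
              exact ⟨j, by omega, hj2⟩
          rw [hsplit]
          exact ih
  obtain ⟨A, hA⟩ := key s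
  have hfinal : St s = M := by
    ext x
    rw [hmem]
    constructor
    · rintro ⟨j, _, hj⟩
      exact htsub j hj
    · intro hx
      obtain ⟨j, hj⟩ := htcover x hx
      exact ⟨j, j.isLt, hj⟩
  rw [hfinal] at hA
  exact ⟨A, hA.1.1, hA.1.2.1, hA.1.2.2, hA.2⟩
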